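/- Let G be a graph obtained by attaching a path P = v1v2...vk with k ≥ 3 to a cycle C, where v1 is adjacent to x and vk is adjacent to y for some (not necessarily distinct) vertices x, y of C. If G is not isomorphic to C_4·C_4 and not isomorphic to G_1, then G is configurable. -/

import Mathlib

open SimpleGraph

/-- `f` is a configuration on `G`. -/
def IsConfig {V : Type*} (G : SimpleGraph V) (f : V → Finset (Fin 5)) : Prop :=
  (∀ v, (f v).card = 2) ∧
  ∀ (v : V) (c : Fin 5), ∃ u, (u = v ∨ G.Adj u v) ∧ c ∈ f u

/-- A graph is configurable if it admits a configuration. -/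
def Configurable {V : Type*} (G : SimpleGraph V) : Prop :=
  ∃ f : V → Finset (Fin 5), IsConfig G f

/-- The graph `C₄·C₄`: two 4-cycles sharing exactly one vertex (the vertex `0`). -/
def C4C4 : SimpleGraph (Fin 7) :=
  SimpleGraph.fromEdgeSet {s(0,1), s(1,2), s(2,3), s(3,0), s(0,4), s(4,5), s(5,6), s(6,0)}

/-- Edges of the 7-cycle `w = 0, a1 = 1, a2 = 2, a3 = 3, b3 = 4, b2 = 5, b1 = 6`. -/
def cyc7Edges : Set (Sym2 (Fin 7)) := {s(0,1), s(1,2), s(2,3), s(3,4), s(4,5), s(5,6), s(6,0)}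

/-- `G₁`: the 7-cycle plus the chord `a2 b2`. -/
def Graph1 : SimpleGraph (Fin 7) := SimpleGraph.fromEdgeSet (cyc7Edges ∪ {s(2,5)})

/-- The graph obtained from the `n`-cycle on `ZMod n` (with `a` adjacent to `a + 1`)
by attaching a path `v_1 … v_k` (on `Fin k`), where `v_1` is joined to the cycle
vertex `x` and `v_k` is joined to the cycle vertex `y`. -/
def cycleAttachPath (n k : ℕ) (x y : ZMod n) : SimpleGraph (ZMod n ⊕ Fin k) :=
  SimpleGraph.fromEdgeSet
    ({e | ∃ a : ZMod n, e = s(Sum.inl a, Sum.inl (a + 1))} ∪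
     {e | ∃ i : ℕ, ∃ h : i + 1 < k,
        e = s(Sum.inr ⟨i, Nat.lt_of_succ_lt h⟩, Sum.inr ⟨i + 1, h⟩)} ∪
     {e | ∃ h : 0 < k, e = s(Sum.inl x, Sum.inr ⟨0, h⟩)} ∪
     {e | ∃ h : 0 < k, e = s(Sum.inl y, Sum.inr ⟨k - 1, by omega⟩)})



open Finset

abbrev FF := Finset (Fin 5)

def A (t : ℕ) : FF := [{0,1},{2,3},{0,4},{1,2},{3,4}].getD (t % 5) ∅

lemma A_eq {s t : ℕ} (h : s % 5 = t % 5) : A s = A t := by unfold A; rw [h]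

lemma A_card (t : ℕ) : (A t).card = 2 := by
  have h : t % 5 < 5 := Nat.mod_lt _ (by omega)
  unfold A; interval_cases h : t % 5 <;> decide

lemma A_triple (t : ℕ) : A t ∪ A (t+1) ∪ A (t+2) = Finset.univ := by
  have h : t % 5 < 5 := Nat.mod_lt _ (by omega)
  rw [A_eq (show t % 5 = t % 5 % 5 by omega), A_eq (show (t+1) % 5 = (t % 5 + 1) % 5 by omega),
      A_eq (show (t+2) % 5 = (t % 5 + 2) % 5 by omega)]
  interval_cases h : t % 5 <;> decide

structure SSpec where
  s0 : FF
  e : FF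
  minM : ℕ
  small : List (List FF)
  head : List FF
  tails : List (List FF)

namespace SSpec

def seq (σ : SSpec) (m j : ℕ) : FF :=
  if m < 14 then (σ.small.getD m []).getD j ∅
  else if j < 7 then σ.head.getD j ∅
  else if m - 7 ≤ j then (σ.tails.getD (m % 5) []).getD (j - (m - 7)) ∅
  else A j

def GoodHead (σ : SSpec) : Prop :=
  σ.head.getD 0 ∅ = σ.s0 ∧ σ.head.getD 5 ∅ = A 5 ∧ σ.head.getD 6 ∅ = A 6 ∧
  (∀ j < 7, (σ.head.getD j ∅).card = 2) ∧
  (∀ j < 6, 1 ≤ j → σ.head.getD (j-1) ∅ ∪ σ.head.getD j ∅ ∪ σ.head.getD (j+1) ∅ = univ)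

def GoodTails (σ : SSpec) : Prop :=
  ∀ r < 5,
    (σ.tails.getD r []).getD 7 ∅ = σ.e ∧
    (∀ e < 8, ((σ.tails.getD r []).getD e ∅).card = 2) ∧
    A (r+1) ∪ A (r+2) ∪ (σ.tails.getD r []).getD 0 ∅ = univ ∧
    A (r+2) ∪ (σ.tails.getD r []).getD 0 ∅ ∪ (σ.tails.getD r []).getD 1 ∅ = univ ∧
    (∀ e < 8, 2 ≤ e → (σ.tails.getD r []).getD (e-2) ∅ ∪ (σ.tails.getD r []).getD (e-1) ∅ ∪
      (σ.tails.getD r []).getD e ∅ = univ)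

def GoodSmall (σ : SSpec) : Prop :=
  ∀ m < 14, σ.minM ≤ m →
    (σ.small.getD m []).getD 0 ∅ = σ.s0 ∧ (σ.small.getD m []).getD m ∅ = σ.e ∧
    (∀ j < m + 1, ((σ.small.getD m []).getD j ∅).card = 2) ∧
    (∀ j < m, 1 ≤ j → (σ.small.getD m []).getD (j-1) ∅ ∪ (σ.small.getD m []).getD j ∅ ∪
      (σ.small.getD m []).getD (j+1) ∅ = univ)

def Good (σ : SSpec) : Prop := σ.GoodHead ∧ σ.GoodTails ∧ σ.GoodSmall

instance (σ : SSpec) : Decidable σ.GoodHead := by unfold GoodHead; infer_instance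
instance (σ : SSpec) : Decidable σ.GoodTails := by unfold GoodTails; infer_instance
instance (σ : SSpec) : Decidable σ.GoodSmall := by unfold GoodSmall; infer_instance

instance (σ : SSpec) : Decidable σ.Good := by unfold Good; infer_instance

variable {σ : SSpec} (hσ : σ.Good)

include hσ

lemma valA {m i : ℕ} (hm : 14 ≤ m) (h5 : 5 ≤ i) (h8 : i ≤ m - 8) : σ.seq m i = A i := by
  unfold seq
  rw [if_neg (by omega)]
  rcases Nat.lt_or_ge i 7 with h7 | h7
  · rw [if_pos h7]
    interval_cases i
    · exact hσ.1.2.1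
    · exact hσ.1.2.2.1
  · rw [if_neg (by omega), if_neg (by omega)]

lemma seq_zero {m : ℕ} (hm : σ.minM ≤ m) : σ.seq m 0 = σ.s0 := by
  unfold seq
  rcases Nat.lt_or_ge m 14 with h | h
  · rw [if_pos h]; exact (hσ.2.2 m h hm).1
  · rw [if_neg (by omega), if_pos (by omega)]; exact hσ.1.1

lemma seq_last {m : ℕ} (hm : σ.minM ≤ m) : σ.seq m m = σ.e := by
  unfold seq
  rcases Nat.lt_or_ge m 14 with h | h
  · rw [if_pos h]; exact (hσ.2.2 m h hm).2.1
  · rw [if_neg (by omega), if_neg (by omega), if_pos (by omega)]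
    have h5 : m % 5 < 5 := Nat.mod_lt _ (by omega)
    have : m - (m - 7) = 7 := by omega
    rw [this]
    exact (hσ.2.1 (m % 5) h5).1

lemma seq_card {m j : ℕ} (hm : σ.minM ≤ m) (hj : j ≤ m) : (σ.seq m j).card = 2 := by
  unfold seq
  rcases Nat.lt_or_ge m 14 with h | h
  · rw [if_pos h]; exact (hσ.2.2 m h hm).2.2.1 j (by omega)
  · rw [if_neg (by omega)]
    rcases Nat.lt_or_ge j 7 with h7 | h7
    · rw [if_pos h7]; exact hσ.1.2.2.2.1 j h7
    · rw [if_neg (by omega)]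
      rcases Nat.lt_or_ge j (m - 7) with h8 | h8
      · rw [if_neg (by omega)]; exact A_card j
      · rw [if_pos h8]
        exact (hσ.2.1 (m % 5) (Nat.mod_lt _ (by omega))).2.1 (j - (m-7)) (by omega)

lemma seq_triple {m j : ℕ} (hm : σ.minM ≤ m) (h1 : 1 ≤ j) (h2 : j < m) :
    σ.seq m (j-1) ∪ σ.seq m j ∪ σ.seq m (j+1) = univ := by
  rcases Nat.lt_or_ge m 14 with h | h
  · have hs := (hσ.2.2 m h hm).2.2.2 j h2 h1
    unfold seq; rw [if_pos h, if_pos h, if_pos h]; exact hs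
  · have h5 : m % 5 < 5 := Nat.mod_lt _ (by omega)
    have htl := hσ.2.1 (m % 5) h5
    rcases Nat.lt_or_ge j 6 with hj6 | hj6
    · -- head region : j ≤ 5
      have e1 : σ.seq m (j-1) = σ.head.getD (j-1) ∅ := by
        unfold seq; rw [if_neg (by omega), if_pos (by omega)]
      have e2 : σ.seq m j = σ.head.getD j ∅ := by
        unfold seq; rw [if_neg (by omega), if_pos (by omega)]
      have e3 : σ.seq m (j+1) = σ.head.getD (j+1) ∅ := by
        unfold seq; rw [if_neg (by omega), if_pos (by omega)]
      rw [e1, e2, e3]; exact hσ.1.2.2.2.2 j hj6 h1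
    · rcases Nat.lt_or_ge j (m - 8) with hj | hj
      · -- pure A region (j-1, j, j+1 all in [5, m-8])
        rw [valA hσ (by omega) (by omega) (by omega),
            valA hσ (by omega) (by omega) (by omega),
            valA hσ (by omega) (by omega) (by omega)]
        have := A_triple (j-1)
        have ej : j - 1 + 1 = j := by omega
        have ej2 : j - 1 + 2 = j + 1 := by omega
        rwa [ej, ej2] at this
      · rcases Nat.lt_or_ge j (m - 7) with hj7 | hj7
        · -- j = m - 8
          have hje : j = m - 8 := by omega
          have e3 : σ.seq m (j+1) = (σ.tails.getD (m % 5) []).getD 0 ∅ := by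
            unfold seq
            rw [if_neg (by omega), if_neg (by omega), if_pos (by omega)]
            congr 1; omega
          rw [valA hσ (by omega) (by omega) (by omega),
              valA hσ (by omega) (by omega) (by omega), e3,
              A_eq (show (j-1) % 5 = (m % 5 + 1) % 5 by omega),
              A_eq (show j % 5 = (m % 5 + 2) % 5 by omega)]
          exact htl.2.2.1
        · rcases Nat.lt_or_ge j (m - 6) with hj8 | hj8
          · -- j = m - 7
            have e1 : σ.seq m (j-1) = A (j-1) := valA hσ (by omega) (by omega) (by omega)
            have e2 : σ.seq m j = (σ.tails.getD (m % 5) []).getD 0 ∅ := by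
              unfold seq; rw [if_neg (by omega), if_neg (by omega), if_pos (by omega)]
              congr 1; omega
            have e3 : σ.seq m (j+1) = (σ.tails.getD (m % 5) []).getD 1 ∅ := by
              unfold seq; rw [if_neg (by omega), if_neg (by omega), if_pos (by omega)]
              congr 1; omega
            rw [e1, e2, e3, A_eq (show (j-1) % 5 = (m % 5 + 2) % 5 by omega)]
            exact htl.2.2.2.1
          · -- tail region : j - 1 ≥ m - 7
            have e1 : σ.seq m (j-1) = (σ.tails.getD (m % 5) []).getD ((j-1) - (m-7)) ∅ := by
              unfold seq; rw [if_neg (by omega), if_neg (by omega), if_pos (by omega)]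
            have e2 : σ.seq m j = (σ.tails.getD (m % 5) []).getD (j - (m-7)) ∅ := by
              unfold seq; rw [if_neg (by omega), if_neg (by omega), if_pos (by omega)]
            have e3 : σ.seq m (j+1) = (σ.tails.getD (m % 5) []).getD ((j+1) - (m-7)) ∅ := by
              unfold seq; rw [if_neg (by omega), if_neg (by omega), if_pos (by omega)]
            rw [e1, e2, e3]
            have := htl.2.2.2.2 ((j+1) - (m-7)) (by omega) (by omega)
            have ea : (j+1) - (m-7) - 2 = (j-1) - (m-7) := by omega
            have eb : (j+1) - (m-7) - 1 = j - (m-7) := by omega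
            rwa [ea, eb] at this

end SSpec
def arc1Spec : SSpec := ⟨{0,1}, {1,2}, 1,
 [[],
  [{0,1},{1,2}],
  [{0,1},{3,4},{1,2}],
  [{0,1},{2,3},{0,4},{1,2}],
  [{0,1},{0,2},{3,4},{0,1},{1,2}],
  [{0,1},{3,4},{0,2},{1,4},{0,3},{1,2}],
  [{0,1},{3,4},{0,2},{1,2},{3,4},{0,3},{1,2}],
  [{0,1},{3,4},{1,2},{0,3},{1,4},{2,4},{0,3},{1,2}],
  [{0,1},{3,4},{0,2},{0,1},{3,4},{0,2},{1,4},{0,3},{1,2}],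
  [{0,1},{3,4},{0,2},{0,1},{3,4},{0,2},{1,2},{3,4},{0,3},{1,2}],
  [{0,1},{3,4},{0,2},{0,1},{3,4},{1,2},{0,3},{1,4},{2,4},{0,3},{1,2}],
  [{0,1},{3,4},{0,2},{0,1},{3,4},{0,2},{0,1},{3,4},{0,2},{1,4},{0,3},{1,2}],
  [{0,1},{3,4},{0,2},{0,1},{3,4},{0,2},{0,1},{3,4},{0,2},{1,2},{3,4},{0,3},{1,2}],
  [{0,1},{3,4},{0,2},{0,1},{3,4},{0,2},{0,1},{3,4},{1,2},{0,3},{1,4},{2,4},{0,3},{1,2}]],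
 [{0,1},{3,4},{0,2},{1,2},{3,4},{0,1},{2,3}],
 [[{1,2},{0,3},{1,4},{0,2},{1,3},{2,4},{0,3},{1,2}],
  [{3,4},{0,1},{2,3},{0,4},{1,2},{3,4},{0,3},{1,2}],
  [{0,1},{2,3},{0,4},{0,1},{2,3},{1,4},{0,3},{1,2}],
  [{2,3},{0,4},{1,2},{0,3},{1,4},{2,4},{0,3},{1,2}],
  [{0,4},{1,2},{3,4},{0,1},{1,2},{3,4},{0,3},{1,2}]]⟩

def arc2Spec : SSpec := ⟨{0,1}, {1,2}, 2,
 [[],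
  [],
  [{0,1},{3,4},{1,2}],
  [{0,1},{2,4},{0,3},{1,2}],
  [{0,1},{2,3},{1,4},{0,3},{1,2}],
  [{0,1},{2,3},{1,4},{0,2},{3,4},{1,2}],
  [{0,1},{2,3},{0,4},{1,2},{0,3},{3,4},{1,2}],
  [{0,1},{2,3},{0,4},{1,3},{1,2},{0,4},{3,4},{1,2}],
  [{0,1},{2,3},{0,4},{0,1},{2,3},{1,4},{0,2},{3,4},{1,2}],
  [{0,1},{2,3},{0,4},{0,1},{2,3},{0,4},{1,2},{0,3},{3,4},{1,2}],
  [{0,1},{2,3},{0,4},{0,1},{2,3},{0,4},{1,3},{1,2},{0,4},{3,4},{1,2}],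
  [{0,1},{2,3},{0,4},{0,1},{2,3},{0,4},{0,1},{2,3},{1,4},{0,2},{3,4},{1,2}],
  [{0,1},{2,3},{0,4},{0,1},{2,3},{0,4},{0,1},{2,3},{0,4},{1,2},{0,3},{3,4},{1,2}],
  [{0,1},{2,3},{0,4},{0,1},{2,3},{0,4},{0,1},{2,3},{0,4},{1,3},{1,2},{0,4},{3,4},{1,2}]],
 [{0,1},{2,3},{0,4},{1,2},{3,4},{0,1},{2,3}],
 [[{1,2},{3,4},{0,1},{2,3},{1,4},{0,2},{3,4},{1,2}],
  [{3,4},{0,1},{2,3},{0,4},{1,2},{0,3},{3,4},{1,2}],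
  [{0,1},{2,3},{0,4},{1,3},{1,2},{0,4},{3,4},{1,2}],
  [{2,3},{0,4},{1,2},{0,3},{1,4},{0,2},{3,4},{1,2}],
  [{0,4},{1,2},{3,4},{0,3},{1,2},{0,4},{3,4},{1,2}]]⟩

def pathSpec : SSpec := ⟨{0,1}, {1,2}, 4,
 [[],
  [],
  [],
  [],
  [{0,1},{1,4},{2,3},{0,4},{1,2}],
  [{0,1},{3,4},{0,2},{1,3},{0,4},{1,2}],
  [{0,1},{3,4},{0,2},{1,2},{3,4},{0,4},{1,2}],
  [{0,1},{3,4},{1,2},{0,3},{1,4},{2,3},{0,4},{1,2}],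
  [{0,1},{3,4},{0,2},{0,1},{3,4},{0,2},{1,3},{0,4},{1,2}],
  [{0,1},{3,4},{0,2},{0,1},{3,4},{0,2},{1,2},{3,4},{0,4},{1,2}],
  [{0,1},{3,4},{0,2},{0,1},{3,4},{1,2},{0,3},{1,4},{2,3},{0,4},{1,2}],
  [{0,1},{3,4},{0,2},{0,1},{3,4},{0,2},{0,1},{3,4},{0,2},{1,3},{0,4},{1,2}],
  [{0,1},{3,4},{0,2},{0,1},{3,4},{0,2},{0,1},{3,4},{0,2},{1,2},{3,4},{0,4},{1,2}],
  [{0,1},{3,4},{0,2},{0,1},{3,4},{0,2},{0,1},{3,4},{1,2},{0,3},{1,4},{2,3},{0,4},{1,2}]],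
 [{0,1},{3,4},{0,2},{1,2},{3,4},{0,1},{2,3}],
 [[{0,1},{2,3},{1,4},{0,3},{1,2},{3,4},{0,4},{1,2}],
  [{3,4},{0,1},{2,3},{0,4},{0,1},{2,3},{0,4},{1,2}],
  [{0,1},{2,3},{1,4},{0,3},{1,2},{3,4},{0,4},{1,2}],
  [{2,3},{0,4},{1,2},{0,3},{1,4},{2,3},{0,4},{1,2}],
  [{0,4},{1,2},{3,4},{0,1},{1,2},{3,4},{0,4},{1,2}]]⟩

def path22Spec : SSpec := ⟨{0,1}, {2,3}, 4,
 [[],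
  [],
  [],
  [],
  [{0,1},{2,3},{0,4},{1,4},{2,3}],
  [{0,1},{2,3},{2,4},{0,1},{3,4},{2,3}],
  [{0,1},{2,3},{0,4},{1,2},{3,4},{0,1},{2,3}],
  [{0,1},{2,3},{0,4},{1,3},{2,4},{0,1},{3,4},{2,3}],
  [{0,1},{2,3},{0,4},{0,1},{2,3},{2,4},{0,1},{3,4},{2,3}],
  [{0,1},{2,3},{0,4},{1,2},{0,3},{1,4},{2,3},{0,1},{3,4},{2,3}],
  [{0,1},{2,3},{0,4},{0,1},{2,3},{0,4},{1,3},{2,4},{0,1},{3,4},{2,3}],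
  [{0,1},{2,3},{0,4},{1,2},{0,3},{1,4},{2,3},{0,1},{2,4},{3,4},{0,1},{2,3}],
  [{0,1},{2,3},{0,4},{0,1},{2,3},{0,4},{1,2},{0,3},{1,4},{2,3},{0,1},{3,4},{2,3}],
  [{0,1},{2,3},{0,4},{0,1},{2,3},{0,4},{0,1},{2,3},{0,4},{1,3},{2,4},{0,1},{3,4},{2,3}]],
 [{0,1},{2,3},{0,4},{1,2},{3,4},{0,1},{2,3}],
 [[{1,2},{3,4},{0,1},{2,3},{2,4},{0,1},{3,4},{2,3}],
  [{3,4},{0,1},{2,3},{0,4},{1,2},{3,4},{0,1},{2,3}],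
  [{0,1},{2,3},{0,4},{1,3},{2,4},{0,1},{3,4},{2,3}],
  [{2,3},{0,4},{1,2},{0,3},{2,4},{0,1},{3,4},{2,3}],
  [{0,4},{1,2},{0,3},{1,4},{2,3},{0,1},{3,4},{2,3}]]⟩

def loopSpec : SSpec := ⟨{0,1}, {0,1}, 3,
 [[],
  [],
  [],
  [{0,1},{3,4},{0,2},{0,1}],
  [{0,1},{0,4},{2,3},{1,4},{0,1}],
  [{0,1},{3,4},{0,2},{1,2},{3,4},{0,1}],
  [{0,1},{3,4},{2,3},{0,1},{2,4},{3,4},{0,1}],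
  [{0,1},{3,4},{0,2},{1,3},{0,4},{1,2},{3,4},{0,1}],
  [{0,1},{3,4},{0,2},{0,1},{3,4},{0,2},{1,2},{3,4},{0,1}],
  [{0,1},{3,4},{0,2},{0,1},{3,4},{2,3},{0,1},{2,4},{3,4},{0,1}],
  [{0,1},{3,4},{0,2},{0,1},{3,4},{0,2},{1,3},{0,4},{1,2},{3,4},{0,1}],
  [{0,1},{3,4},{0,2},{0,1},{3,4},{0,2},{0,1},{3,4},{0,2},{1,2},{3,4},{0,1}],
  [{0,1},{3,4},{0,2},{0,1},{3,4},{0,2},{0,1},{3,4},{2,3},{0,1},{2,4},{3,4},{0,1}],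
  [{0,1},{3,4},{0,2},{0,1},{3,4},{0,2},{0,1},{3,4},{0,2},{1,3},{0,4},{1,2},{3,4},{0,1}]],
 [{0,1},{3,4},{0,2},{1,2},{3,4},{0,1},{2,3}],
 [[{1,2},{3,4},{0,1},{2,3},{0,4},{1,2},{3,4},{0,1}],
  [{3,4},{0,1},{2,3},{0,4},{0,1},{2,3},{3,4},{0,1}],
  [{0,2},{0,1},{3,4},{2,3},{0,1},{2,4},{3,4},{0,1}],
  [{2,3},{0,4},{1,2},{0,3},{0,4},{1,2},{3,4},{0,1}],
  [{0,4},{1,2},{0,3},{2,4},{0,1},{2,3},{3,4},{0,1}]]⟩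

def path0Spec : SSpec := ⟨{0,1}, {0,1}, 4,
 [[],
  [],
  [],
  [],
  [{0,1},{0,2},{3,4},{1,2},{0,1}],
  [{0,1},{2,3},{0,4},{1,4},{2,3},{0,1}],
  [{0,1},{2,3},{2,4},{0,1},{3,4},{2,3},{0,1}],
  [{0,1},{2,3},{0,4},{1,2},{0,3},{1,4},{2,3},{0,1}],
  [{0,1},{2,3},{0,4},{0,1},{2,3},{0,4},{1,4},{2,3},{0,1}],
  [{0,1},{2,3},{0,4},{0,1},{2,3},{2,4},{0,1},{3,4},{2,3},{0,1}],
  [{0,1},{2,3},{0,4},{0,1},{2,3},{0,4},{1,2},{0,3},{1,4},{2,3},{0,1}],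
  [{0,1},{2,3},{0,4},{0,1},{2,3},{0,4},{0,1},{2,3},{0,4},{1,4},{2,3},{0,1}],
  [{0,1},{2,3},{0,4},{0,1},{2,3},{0,4},{0,1},{2,3},{2,4},{0,1},{3,4},{2,3},{0,1}],
  [{0,1},{2,3},{0,4},{0,1},{2,3},{0,4},{0,1},{2,3},{0,4},{1,2},{0,3},{1,4},{2,3},{0,1}]],
 [{0,1},{2,3},{0,4},{1,2},{3,4},{0,1},{2,3}],
 [[{1,2},{3,4},{0,1},{2,3},{0,4},{1,4},{2,3},{0,1}],
  [{3,4},{0,1},{2,3},{2,4},{0,1},{3,4},{2,3},{0,1}],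
  [{0,1},{2,3},{0,4},{1,2},{0,3},{1,4},{2,3},{0,1}],
  [{2,3},{0,4},{1,2},{2,3},{0,4},{1,4},{2,3},{0,1}],
  [{0,4},{1,2},{3,4},{0,2},{0,1},{3,4},{2,3},{0,1}]]⟩

lemma arc1_good : arc1Spec.Good := by decide
lemma arc2_good : arc2Spec.Good := by decide
lemma path_good : pathSpec.Good := by decide
lemma path22_good : path22Spec.Good := by decide
lemma loop_good : loopSpec.Good := by decide
lemma path0_good : path0Spec.Good := by decide

namespace SSpec
lemma seq_one_fml (σ : SSpec) {m : ℕ} (h : 14 ≤ m) : σ.seq m 1 = σ.head.getD 1 ∅ := by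
  unfold seq; rw [if_neg (by omega), if_pos (by omega)]
lemma seq_pre_fml (σ : SSpec) {m : ℕ} (h : 14 ≤ m) :
    σ.seq m (m-1) = (σ.tails.getD (m % 5) []).getD 6 ∅ := by
  unfold seq; rw [if_neg (by omega), if_neg (by omega), if_pos (by omega)]
  congr 1; omega
end SSpec

section IfaceLemmas
variable {m : ℕ}

lemma pre_by_tails {σ : SSpec} (h : 14 ≤ m)
    (hv : ∀ r < 5, (σ.tails.getD r []).getD 6 ∅ = v) : σ.seq m (m-1) = v := by
  rw [SSpec.seq_pre_fml σ h]; exact hv _ (Nat.mod_lt _ (by omega))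

lemma arc1_one5 (h5 : 5 ≤ m) : arc1Spec.seq m 1 = {3,4} := by
  rcases Nat.lt_or_ge m 14 with h | h
  · interval_cases m <;> decide
  · rw [SSpec.seq_one_fml _ h]; decide
lemma arc1_pre5 (h5 : 5 ≤ m) : arc1Spec.seq m (m-1) = {0,3} := by
  rcases Nat.lt_or_ge m 14 with h | h
  · interval_cases m <;> decide
  · exact pre_by_tails h (by decide)
lemma arc2_one5 (h5 : 5 ≤ m) : arc2Spec.seq m 1 = {2,3} := by
  rcases Nat.lt_or_ge m 14 with h | h
  · interval_cases m <;> decide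
  · rw [SSpec.seq_one_fml _ h]; decide
lemma arc2_pre5 (h5 : 5 ≤ m) : arc2Spec.seq m (m-1) = {3,4} := by
  rcases Nat.lt_or_ge m 14 with h | h
  · interval_cases m <;> decide
  · exact pre_by_tails h (by decide)
lemma path_one5 (h5 : 5 ≤ m) : pathSpec.seq m 1 = {3,4} := by
  rcases Nat.lt_or_ge m 14 with h | h
  · interval_cases m <;> decide
  · rw [SSpec.seq_one_fml _ h]; decide
lemma path_pre4 (h5 : 4 ≤ m) : pathSpec.seq m (m-1) = {0,4} := by
  rcases Nat.lt_or_ge m 14 with h | h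
  · interval_cases m <;> decide
  · exact pre_by_tails h (by decide)
lemma path22_one4 (h5 : 4 ≤ m) : path22Spec.seq m 1 = {2,3} := by
  rcases Nat.lt_or_ge m 14 with h | h
  · interval_cases m <;> decide
  · rw [SSpec.seq_one_fml _ h]; decide
lemma loop_one5 (h5 : 5 ≤ m) : loopSpec.seq m 1 = {3,4} := by
  rcases Nat.lt_or_ge m 14 with h | h
  · interval_cases m <;> decide
  · rw [SSpec.seq_one_fml _ h]; decide
lemma loop_pre5 (h5 : 5 ≤ m) : loopSpec.seq m (m-1) = {3,4} := by
  rcases Nat.lt_or_ge m 14 with h | h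
  · interval_cases m <;> decide
  · exact pre_by_tails h (by decide)
lemma path0_one5 (h5 : 5 ≤ m) : path0Spec.seq m 1 = {2,3} := by
  rcases Nat.lt_or_ge m 14 with h | h
  · interval_cases m <;> decide
  · rw [SSpec.seq_one_fml _ h]; decide
lemma path0_pre5 (h5 : 5 ≤ m) : path0Spec.seq m (m-1) = {2,3} := by
  rcases Nat.lt_or_ge m 14 with h | h
  · interval_cases m <;> decide
  · exact pre_by_tails h (by decide)
end IfaceLemmas

def Cond (n k d : ℕ) (gc gp : ℕ → FF) : Prop :=
  (∀ t < n, (gc t).card = 2) ∧ (∀ i < k, (gp i).card = 2) ∧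
  (∀ t < n, Finset.univ ⊆ gc ((t+1) % n) ∪ gc ((t+(n-1)) % n) ∪ gc t ∪
     (if t = 0 then gp 0 else ∅) ∪ (if t = d then gp (k-1) else ∅)) ∧
  (∀ i < k, Finset.univ ⊆ (if i = 0 then gc 0 else gp (i-1)) ∪
     (if i = k-1 then gc d else gp (i+1)) ∪ gp i)

lemma perm1 {a b c d e : FF} (h : a ∪ b ∪ c = univ) : univ ⊆ c ∪ a ∪ b ∪ d ∪ e := by
  intro x _
  have hx : x ∈ a ∪ b ∪ c := h ▸ mem_univ x
  simp only [mem_union] at hx ⊢; tauto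

lemma perm2 {a b c d e : FF} (h : a ∪ b ∪ c = univ) : univ ⊆ a ∪ c ∪ b ∪ d ∪ e := by
  intro x _
  have hx : x ∈ a ∪ b ∪ c := h ▸ mem_univ x
  simp only [mem_union] at hx ⊢; tauto

lemma perm4 {a b c : FF} (h : a ∪ b ∪ c = univ) : univ ⊆ c ∪ a ∪ b := by
  intro x _
  have hx : x ∈ a ∪ b ∪ c := h ▸ mem_univ x
  simp only [mem_union] at hx ⊢; tauto

lemma perm3 {a b c : FF} (h : a ∪ b ∪ c = univ) : univ ⊆ a ∪ c ∪ b := by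
  intro x _
  have hx : x ∈ a ∪ b ∪ c := h ▸ mem_univ x
  simp only [mem_union] at hx ⊢; tauto

lemma mod_succ {n t : ℕ} (h : t < n) : (t+1) % n = if t = n-1 then 0 else t+1 := by
  rcases eq_or_ne t (n-1) with rfl | hne
  · rw [if_pos rfl, show n - 1 + 1 = n by omega, Nat.mod_self]
  · rw [if_neg hne]; exact Nat.mod_eq_of_lt (by omega)

lemma mod_pred {n t : ℕ} (h : t < n) (h0 : 0 < n) :
    (t + (n-1)) % n = if t = 0 then n-1 else t-1 := by
  rcases eq_or_ne t 0 with rfl | hne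
  · rw [if_pos rfl, Nat.zero_add]; apply Nat.mod_eq_of_lt; omega
  · rw [if_neg hne]
    have h2 : t + (n-1) = n + (t-1) := by omega
    rw [h2, Nat.add_mod_left]
    apply Nat.mod_eq_of_lt; omega

def G22 : List FF := [{0,1},{0,4},{2,3},{1,4}]

def gcF (n d : ℕ) : ℕ → FF := fun t =>
  if d = 0 then loopSpec.seq n t
  else if n = 4 ∧ d = 2 then G22.getD t ∅
  else if t ≤ d then arc1Spec.seq d t
  else arc2Spec.seq (n-d) (n-t)

def gpF (n k d : ℕ) : ℕ → FF := fun i =>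
  if d = 0 then path0Spec.seq (k+1) (i+1)
  else if n = 4 ∧ d = 2 then path22Spec.seq (k+1) (i+1)
  else pathSpec.seq (k+1) (i+1)

theorem main22 (k : ℕ) (hk : 3 ≤ k) : Cond 4 k 2 (gcF 4 2) (gpF 4 k 2) := by
  have hgc : ∀ t, gcF 4 2 t = G22.getD t ∅ := by
    intro t; unfold gcF; norm_num
  have hgp : ∀ i, gpF 4 k 2 i = path22Spec.seq (k+1) (i+1) := by
    intro i; unfold gpF; norm_num
  have hm : path22Spec.minM ≤ k + 1 := by show 4 ≤ k + 1; omega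
  refine ⟨?_, ?_, ?_, ?_⟩
  · intro t ht; rw [hgc]; interval_cases t <;> decide
  · intro i hi; rw [hgp]; exact SSpec.seq_card path22_good hm (by omega)
  · intro t ht
    have h0 := path22_one4 (show 4 ≤ k+1 by omega)
    interval_cases t
    · rw [show (0+1) % 4 = 1 from rfl, show (0+(4-1)) % 4 = 3 from rfl,
          if_pos rfl, if_neg (by omega), hgc, hgc, hgc, hgp]
      rw [show (0:ℕ)+1 = 1 from rfl, h0, Finset.union_empty]
      decide
    · rw [show (1+1) % 4 = 2 from rfl, show (1+(4-1)) % 4 = 0 from rfl,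
          if_neg (by omega), if_neg (by omega), hgc, hgc, hgc]
      rw [Finset.union_empty, Finset.union_empty]
      decide
    · rw [show (2+1) % 4 = 3 from rfl, show (2+(4-1)) % 4 = 1 from rfl,
          if_neg (by omega), if_pos rfl, hgc, hgc, hgc]
      rw [Finset.union_empty]
      have hu : (G22.getD 3 ∅ ∪ G22.getD 1 ∅ ∪ G22.getD 2 ∅ : FF) = univ := by decide
      intro x _
      exact mem_union_left _ (hu ▸ mem_univ x)
    · rw [show (3+1) % 4 = 0 from rfl, show (3+(4-1)) % 4 = 2 from rfl,
          if_neg (by omega), if_neg (by omega), hgc, hgc, hgc]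
      rw [Finset.union_empty, Finset.union_empty]
      decide
  · intro i hi
    have htr : ∀ j, 1 ≤ j → j < k+1 → path22Spec.seq (k+1) (j-1) ∪ path22Spec.seq (k+1) j ∪
        path22Spec.seq (k+1) (j+1) = univ := fun j h1 h2 => SSpec.seq_triple path22_good hm h1 h2
    rcases eq_or_ne i 0 with rfl | hi0
    · rw [if_pos rfl, if_neg (by omega), hgp, hgp]
      rw [show gcF 4 2 0 = path22Spec.seq (k+1) 0 by
            rw [hgc, SSpec.seq_zero path22_good hm]; decide]
      have := htr 1 (by omega) (by omega)
      rw [show (1:ℕ)-1 = 0 from rfl] at this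
      exact perm3 this |>.trans (by rw [show (0:ℕ)+1 = 1 from rfl])
    · rcases eq_or_ne i (k-1) with rfl | hik
      · rw [if_neg hi0, if_pos rfl, hgp, hgp]
        rw [show gcF 4 2 2 = path22Spec.seq (k+1) (k+1) by
              rw [hgc, SSpec.seq_last path22_good hm]; decide]
        have := htr k (by omega) (by omega)
        have e1 : k - 1 - 1 + 1 = k - 1 := by omega
        have e2 : k - 1 + 1 = k := by omega
        rw [e1, e2]
        have := perm3 this
        rwa [show k - 1 = k - 1 from rfl, show k + 1 = k + 1 from rfl] at this
      · rw [if_neg hi0, if_neg hik, hgp, hgp, hgp]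
        have := htr (i+1) (by omega) (by omega)
        have e1 : i - 1 + 1 = i := by omega
        have e2 : i + 1 + 1 = i + 2 := by omega
        rw [e1, e2]
        have h3 := perm3 this
        rwa [show i + 1 - 1 = i from rfl, e2] at h3

lemma hp_gen {k : ℕ} (hk : 3 ≤ k) {σ : SSpec} (hσ : σ.Good) (hm : σ.minM ≤ k+1)
    {gp : ℕ → FF} (hgp : ∀ i, gp i = σ.seq (k+1) (i+1)) {g0 gd : FF}
    (h0 : g0 = σ.s0) (hd : gd = σ.e) :
    ∀ i < k, Finset.univ ⊆ (if i = 0 then g0 else gp (i-1)) ∪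
      (if i = k-1 then gd else gp (i+1)) ∪ gp i := by
  intro i hi
  rcases eq_or_ne i 0 with rfl | hi0
  · rw [if_pos rfl, if_neg (by omega), hgp, hgp, h0, ← SSpec.seq_zero hσ hm]
    have h3 := perm3 (SSpec.seq_triple hσ hm (j := 1) (by omega) (by omega))
    norm_num at h3 ⊢
    exact h3
  · rcases eq_or_ne i (k-1) with rfl | hik
    · rw [if_neg hi0, if_pos rfl, hgp, hgp, hd, ← SSpec.seq_last hσ hm]
      have h3 := perm3 (SSpec.seq_triple hσ hm (j := k) (by omega) (by omega))
      rw [show k - 1 + 1 = k by omega, show k - 1 - 1 + 1 = k - 1 by omega]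
      rwa [show k - 1 = k - 1 from rfl] at h3
    · rw [if_neg hi0, if_neg hik, hgp, hgp, hgp]
      have h3 := perm3 (SSpec.seq_triple hσ hm (j := i+1) (by omega) (by omega))
      rw [show i - 1 + 1 = i by omega]
      rwa [show i + 1 - 1 = i by omega] at h3

theorem mainPos0 (n k : ℕ) (hn : 3 ≤ n) (hk : 3 ≤ k) (hexc : ¬(n = 4 ∧ k = 3)) :
    Cond n k 0 (gcF n 0) (gpF n k 0) := by
  have hgc : ∀ t, gcF n 0 t = loopSpec.seq n t := fun t => by unfold gcF; rw [if_pos rfl]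
  have hgp : ∀ i, gpF n k 0 i = path0Spec.seq (k+1) (i+1) := fun i => by
    unfold gpF; rw [if_pos rfl]
  have hmn : loopSpec.minM ≤ n := by show 3 ≤ n; omega
  have hmp : path0Spec.minM ≤ k + 1 := by show 4 ≤ k + 1; omega
  refine ⟨?_, ?_, ?_, ?_⟩
  · intro t ht; rw [hgc]; exact SSpec.seq_card loop_good hmn (by omega)
  · intro i hi; rw [hgp]; exact SSpec.seq_card path0_good hmp (by omega)
  · intro t ht
    rcases eq_or_ne t 0 with rfl | ht0
    · rw [show (0+1) % n = 1 by rw [Nat.zero_add]; apply Nat.mod_eq_of_lt; omega,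
          mod_pred (by omega) (by omega), if_pos rfl, if_pos rfl, if_pos rfl,
          hgc, hgc, hgc, hgp, hgp, SSpec.seq_zero loop_good hmn]
      rw [show (0:ℕ)+1 = 1 from rfl]
      rcases (show n = 3 ∨ n = 4 ∨ 5 ≤ n by omega) with rfl | rfl | h5 <;>
        rcases eq_or_ne k 3 with rfl | hk3
      · decide
      · rw [path0_one5 (by omega), show k - 1 + 1 = (k+1) - 1 by omega, path0_pre5 (by omega)]
        decide
      · exact absurd ⟨rfl, rfl⟩ hexc
      · rw [path0_one5 (by omega), show k - 1 + 1 = (k+1) - 1 by omega, path0_pre5 (by omega)]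
        decide
      · rw [loop_one5 h5, loop_pre5 h5]
        decide
      · rw [loop_one5 h5, loop_pre5 h5, path0_one5 (by omega),
            show k - 1 + 1 = (k+1) - 1 by omega, path0_pre5 (by omega)]
        decide
    · rw [if_neg ht0, if_neg ht0, Finset.union_empty, Finset.union_empty,
          mod_succ ht, mod_pred ht (by omega), if_neg ht0, hgc, hgc, hgc]
      have hA : (if t = n - 1 then (0:ℕ) else t+1) = (if t = n - 1 then 0 else t+1) := rfl
      rw [apply_ite (loopSpec.seq n)]
      have hB : loopSpec.seq n 0 = loopSpec.seq n (t+1) ∨ (¬ t = n-1) := by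
        rcases eq_or_ne t (n-1) with rfl | hne
        · left
          rw [SSpec.seq_zero loop_good hmn, show n - 1 + 1 = n by omega,
              SSpec.seq_last loop_good hmn]
          decide
        · right; exact hne
      have hC : (if t = n-1 then loopSpec.seq n 0 else loopSpec.seq n (t+1)) =
          loopSpec.seq n (t+1) := by
        rcases hB with hB | hB
        · split <;> [exact hB; rfl]
        · rw [if_neg hB]
      rw [hC]
      exact perm4 (SSpec.seq_triple loop_good hmn (j := t) (by omega) (by omega))
  · have := hp_gen hk path0_good hmp hgp (g0 := gcF n 0 0) (gd := gcF n 0 0) ?_ ?_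
    · exact this
    · rw [hgc, SSpec.seq_zero loop_good hmn]; decide
    · rw [hgc, SSpec.seq_zero loop_good hmn]; decide

theorem mainPosStd (n k d : ℕ) (hn : 3 ≤ n) (hk : 3 ≤ k) (hd1 : 1 ≤ d) (hd2 : 2*d ≤ n)
    (h22 : ¬(n = 4 ∧ d = 2)) (hexc : ¬(n = 4 ∧ k = 3 ∧ d = 1)) :
    Cond n k d (gcF n d) (gpF n k d) := by
  have hd0 : d ≠ 0 := by omega
  have hgc1 : ∀ t, t ≤ d → gcF n d t = arc1Spec.seq d t := by
    intro t htd; unfold gcF; rw [if_neg hd0, if_neg (by tauto), if_pos htd]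
  have hgc2 : ∀ t, d < t → gcF n d t = arc2Spec.seq (n-d) (n-t) := by
    intro t htd; unfold gcF; rw [if_neg hd0, if_neg (by tauto), if_neg (by omega)]
  have hgp : ∀ i, gpF n k d i = pathSpec.seq (k+1) (i+1) := by
    intro i; unfold gpF; rw [if_neg hd0, if_neg (by tauto)]
  have hb2 : 2 ≤ n - d := by omega
  have hdn1 : d < n - 1 := by omega
  have hm1 : arc1Spec.minM ≤ d := by show 1 ≤ d; omega
  have hm2 : arc2Spec.minM ≤ n - d := by show 2 ≤ n - d; omega
  have hmp : pathSpec.minM ≤ k + 1 := by show 4 ≤ k+1; omega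
  refine ⟨?_, ?_, ?_, ?_⟩
  · intro t ht
    rcases le_or_gt t d with h | h
    · rw [hgc1 t h]; exact SSpec.seq_card arc1_good hm1 h
    · rw [hgc2 t h]; exact SSpec.seq_card arc2_good hm2 (by omega)
  · intro i hi; rw [hgp]; exact SSpec.seq_card path_good hmp (by omega)
  · intro t ht
    rcases eq_or_ne t 0 with rfl | ht0
    · rw [show (0+1) % n = 1 by rw [Nat.zero_add]; apply Nat.mod_eq_of_lt; omega,
          mod_pred (by omega) (by omega), if_pos rfl, if_pos rfl,
          if_neg (show ¬((0:ℕ) = d) by omega), Finset.union_empty,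
          hgc1 1 (by omega), hgc1 0 (by omega),
          hgc2 (n-1) (by omega), hgp, SSpec.seq_zero arc1_good hm1,
          show n - (n-1) = 1 by omega, show (0:ℕ)+1 = 1 from rfl]
      obtain ⟨b, hb⟩ : ∃ b, n - d = b := ⟨_, rfl⟩
      have hdb : d ≤ b := by omega
      rw [hb]
      rcases (show d = 1 ∨ d = 2 ∨ d = 3 ∨ d = 4 ∨ 5 ≤ d by omega) with rfl|rfl|rfl|rfl|hd5 <;>
        rcases (show b = 2 ∨ b = 3 ∨ b = 4 ∨ 5 ≤ b by omega) with rfl|rfl|rfl|hb5 <;>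
          rcases eq_or_ne k 3 with rfl|hk4
      · decide
      · rw [path_one5 (by omega)]; decide
      · exact absurd ⟨by omega, rfl, rfl⟩ hexc
      · rw [path_one5 (by omega)]; decide
      · decide
      · rw [path_one5 (by omega)]; decide
      · rw [arc2_one5 hb5]; decide
      · rw [arc2_one5 hb5, path_one5 (by omega)]; decide
      · exact absurd ⟨by omega, rfl⟩ h22
      · exact absurd ⟨by omega, rfl⟩ h22
      · decide
      · rw [path_one5 (by omega)]; decide
      · decide
      · rw [path_one5 (by omega)]; decide
      · rw [arc2_one5 hb5]; decide
      · rw [arc2_one5 hb5, path_one5 (by omega)]; decide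
      · omega
      · omega
      · decide
      · rw [path_one5 (by omega)]; decide
      · decide
      · rw [path_one5 (by omega)]; decide
      · rw [arc2_one5 hb5]; decide
      · rw [arc2_one5 hb5, path_one5 (by omega)]; decide
      · omega
      · omega
      · omega
      · omega
      · decide
      · rw [path_one5 (by omega)]; decide
      · rw [arc2_one5 hb5]; decide
      · rw [arc2_one5 hb5, path_one5 (by omega)]; decide
      · omega
      · omega
      · omega
      · omega
      · omega
      · omega
      · rw [arc1_one5 hd5, arc2_one5 hb5]; decide
      · rw [arc1_one5 hd5, arc2_one5 hb5, path_one5 (by omega)]; decide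
    rcases eq_or_ne t d with rfl | htd
    · rw [show (t+1) % n = t+1 by apply Nat.mod_eq_of_lt; omega,
          mod_pred (by omega) (by omega), if_neg ht0, if_neg ht0, if_pos rfl,
          hgc1 (t-1) (by omega), hgc1 t le_rfl,
          hgc2 (t+1) (by omega), hgp, SSpec.seq_last arc1_good hm1,
          show k - 1 + 1 = (k+1) - 1 by omega, path_pre4 (by omega),
          Finset.union_empty]
      obtain ⟨b, hb⟩ : ∃ b, n - t = b := ⟨_, rfl⟩
      have hdb : t ≤ b := by omega
      rw [hb, show n - (t+1) = b - 1 by omega]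
      rcases (show t = 1 ∨ t = 2 ∨ t = 3 ∨ t = 4 ∨ 5 ≤ t by omega) with rfl|rfl|rfl|rfl|hd5 <;>
        rcases (show b = 2 ∨ b = 3 ∨ b = 4 ∨ 5 ≤ b by omega) with rfl|rfl|rfl|hb5
      · decide
      · decide
      · decide
      · rw [arc2_pre5 hb5]; decide
      · exact absurd ⟨by omega, rfl⟩ h22
      · decide
      · decide
      · rw [arc2_pre5 hb5]; decide
      · omega
      · decide
      · decide
      · rw [arc2_pre5 hb5]; decide
      · omega
      · omega
      · decide
      · rw [arc2_pre5 hb5]; decide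
      · omega
      · omega
      · omega
      · rw [arc1_pre5 hd5, arc2_pre5 hb5]; decide
    · rcases le_or_gt t d with htle | htgt
      · rw [show (t+1) % n = t+1 by apply Nat.mod_eq_of_lt; omega,
            mod_pred (by omega) (by omega), if_neg ht0, if_neg ht0, if_neg htd,
            Finset.union_empty, Finset.union_empty,
            hgc1 (t+1) (by omega), hgc1 (t-1) (by omega), hgc1 t (by omega)]
        exact perm4 (SSpec.seq_triple arc1_good hm1 (j := t) (by omega) (by omega))
      · rw [mod_pred (by omega) (by omega), if_neg ht0, if_neg ht0, if_neg htd,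
            Finset.union_empty, Finset.union_empty, hgc2 t htgt]
        have hA : gcF n d ((t+1) % n) = arc2Spec.seq (n-d) (n-t-1) := by
          rcases eq_or_ne t (n-1) with rfl | hne
          · rw [show (n-1+1) % n = 0 by rw [show n-1+1 = n by omega]; exact Nat.mod_self n,
                hgc1 0 (by omega), SSpec.seq_zero arc1_good hm1,
                show n - (n-1) - 1 = 0 by omega, SSpec.seq_zero arc2_good hm2]
            decide
          · rw [show (t+1) % n = t+1 by apply Nat.mod_eq_of_lt; omega,
                hgc2 (t+1) (by omega), show n - (t+1) = n - t - 1 by omega]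
        have hB : gcF n d (t-1) = arc2Spec.seq (n-d) (n-t+1) := by
          rcases eq_or_ne (t-1) d with he | hne
          · rw [he, hgc1 d le_rfl, SSpec.seq_last arc1_good hm1,
                show n - t + 1 = n - d by omega, SSpec.seq_last arc2_good hm2]
            decide
          · rw [hgc2 (t-1) (by omega), show n - (t-1) = n - t + 1 by omega]
        rw [hA, hB]
        exact perm3 (SSpec.seq_triple arc2_good hm2 (j := n-t) (by omega) (by omega))
  · refine hp_gen hk path_good hmp hgp ?_ ?_
    · rw [hgc1 0 (by omega), SSpec.seq_zero arc1_good hm1]; decide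
    · rw [hgc1 d le_rfl, SSpec.seq_last arc1_good hm1]; decide

lemma perm6 {a b c d e : FF} (h : Finset.univ ⊆ a ∪ b ∪ c ∪ d ∪ e) :
    Finset.univ ⊆ b ∪ a ∪ c ∪ d ∪ e := by
  intro x hx
  have := h hx
  simp only [mem_union] at this ⊢; tauto

theorem reflCond (n k d : ℕ) (hn : 3 ≤ n) (hd1 : 1 ≤ d) (hdn : d < n) (gc gp : ℕ → FF)
    (h : Cond n k d gc gp) : Cond n k (n-d) (fun t => gc ((n-t) % n)) gp := by
  obtain ⟨h1, h2, h3, h4⟩ := h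
  refine ⟨?_, h2, ?_, ?_⟩
  · intro t ht; exact h1 _ (Nat.mod_lt _ (by omega))
  · intro t ht
    simp only []
    rcases eq_or_ne t 0 with rfl | ht0
    · have key := h3 0 (by omega)
      rw [show (0+1) % n = 1 by rw [Nat.zero_add]; apply Nat.mod_eq_of_lt; omega,
          show (0+(n-1)) % n = n-1 by rw [Nat.zero_add]; apply Nat.mod_eq_of_lt; omega,
          if_pos rfl, if_neg (show ¬((0:ℕ) = d) by omega)] at key
      rw [show (0+1) % n = 1 by rw [Nat.zero_add]; apply Nat.mod_eq_of_lt; omega,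
          show (0+(n-1)) % n = n-1 by rw [Nat.zero_add]; apply Nat.mod_eq_of_lt; omega,
          show (n - (n-1)) % n = 1 by rw [show n - (n-1) = 1 by omega]; apply Nat.mod_eq_of_lt; omega,
          show (n - 1) % n = n - 1 by apply Nat.mod_eq_of_lt; omega,
          show (n - 0) % n = 0 by rw [Nat.sub_zero, Nat.mod_self],
          if_pos rfl, if_neg (show ¬((0:ℕ) = n - d) by omega)]
      exact perm6 key
    · have key := h3 (n-t) (by omega)
      have i3 : ((n-t)+(n-1)) % n = n - t - 1 := by
        rw [mod_pred (by omega) (by omega), if_neg (show ¬(n-t = 0) by omega)]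
      rw [i3, if_neg (show ¬(n-t = 0) by omega),
          show (if n-t = d then gp (k-1) else ∅) = (if t = n-d then gp (k-1) else ∅) from
            if_congr (by omega) rfl rfl] at key
      have i1 : (n - ((t+1) % n)) % n = n - t - 1 := by
        rcases eq_or_ne t (n-1) with rfl | hne
        · rw [show (n-1+1) % n = 0 by rw [show n-1+1 = n by omega]; exact Nat.mod_self n,
              Nat.sub_zero, Nat.mod_self]
          omega
        · rw [show (t+1) % n = t+1 by apply Nat.mod_eq_of_lt; omega,
              show n - (t+1) = n - t - 1 by omega]
          apply Nat.mod_eq_of_lt; omega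
      have i2 : (n - ((t+(n-1)) % n)) % n = ((n-t)+1) % n := by
        rw [mod_pred ht (by omega), if_neg ht0]
        rcases eq_or_ne t 1 with rfl | hne
        · rw [show n - (1-1) = n by omega, Nat.mod_self,
              show n - 1 + 1 = n by omega, Nat.mod_self]
        · rw [show n - (t-1) = n - t + 1 by omega]
      rw [i1, i2, show (n-t) % n = n - t by apply Nat.mod_eq_of_lt; omega, if_neg ht0]
      exact perm6 key
  · intro i hi
    have key := h4 i hi
    simp only []
    rw [show (n - 0) % n = 0 by rw [Nat.sub_zero, Nat.mod_self],
        show (n - (n - d)) % n = d by rw [show n - (n-d) = d by omega]; apply Nat.mod_eq_of_lt; omega]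
    exact key

open SimpleGraph

lemma cap_adj {n k : ℕ} (hk : 0 < k) (x y : ZMod n) (u v : ZMod n ⊕ Fin k) :
    (cycleAttachPath n k x y).Adj u v ↔ u ≠ v ∧
      ((∃ a : ZMod n, s(u, v) = s(Sum.inl a, Sum.inl (a+1))) ∨
       (∃ i : Fin k, ∃ h : (i : ℕ) + 1 < k, s(u,v) = s(Sum.inr i, Sum.inr ⟨(i:ℕ)+1, h⟩)) ∨
       s(u,v) = s(Sum.inl x, Sum.inr ⟨0, hk⟩) ∨
       s(u,v) = s(Sum.inl y, Sum.inr ⟨k-1, Nat.sub_lt hk one_pos⟩)) := by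
  unfold cycleAttachPath
  rw [SimpleGraph.fromEdgeSet_adj, and_comm]
  apply and_congr_right
  intro hne
  simp only [Set.mem_union, Set.mem_setOf_eq]
  constructor
  · rintro (((⟨a, ha⟩ | ⟨i, hi, he⟩) | ⟨h0, he⟩) | ⟨h0, he⟩)
    · exact Or.inl ⟨a, ha⟩
    · exact Or.inr (Or.inl ⟨⟨i, Nat.lt_of_succ_lt hi⟩, hi, he⟩)
    · exact Or.inr (Or.inr (Or.inl he))
    · exact Or.inr (Or.inr (Or.inr he))
  · rintro (⟨a, ha⟩ | ⟨i, hi, he⟩ | he | he)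
    · exact Or.inl (Or.inl (Or.inl ⟨a, ha⟩))
    · exact Or.inl (Or.inl (Or.inr ⟨(i : ℕ), hi, he⟩))
    · exact Or.inl (Or.inr ⟨hk, he⟩)
    · exact Or.inr ⟨hk, he⟩

theorem bridge (n k d : ℕ) (hn : 3 ≤ n) (hk : 3 ≤ k) (hd : d < n) (x : ZMod n)
    (gc gp : ℕ → FF) (h : Cond n k d gc gp) :
    Configurable (cycleAttachPath n k x (x + (d : ZMod n))) := by
  haveI : NeZero n := ⟨by omega⟩
  haveI : Fact (1 < n) := ⟨by omega⟩
  have hk0 : 0 < k := by omega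
  obtain ⟨h1, h2, h3, h4⟩ := h
  set y : ZMod n := x + (d : ZMod n) with hy
  have hyd : (y - x).val = d := by
    rw [hy, add_sub_cancel_left, ZMod.val_cast_of_lt hd]
  refine ⟨fun v => Sum.elim (fun a => gc ((a - x).val)) (fun i => gp i.val) v, ?_, ?_⟩
  · intro v
    rcases v with a | i
    · exact h1 _ (ZMod.val_lt _)
    · exact h2 _ i.isLt
  · intro v c
    rcases v with a | i
    · have ht : (a - x).val < n := ZMod.val_lt _
      have hmem := h3 ((a-x).val) ht (mem_univ c)
      simp only [mem_union] at hmem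
      rcases hmem with ((((hm | hm) | hm) | hm) | hm)
      · refine ⟨Sum.inl (a+1), Or.inr ?_, ?_⟩
        · rw [cap_adj hk0]
          refine ⟨?_, Or.inl ⟨a, Sym2.eq_swap⟩⟩
          intro he
          have h1' : a + 1 = a + 0 := by rw [add_zero]; exact Sum.inl.inj he
          exact one_ne_zero (add_left_cancel h1')
        · show c ∈ gc ((a + 1 - x).val)
          have e1 : a + 1 - x = (a - x) + 1 := by ring
          rw [e1, ZMod.val_add, ZMod.val_one]
          exact hm
      · refine ⟨Sum.inl (a-1), Or.inr ?_, ?_⟩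
        · rw [cap_adj hk0]
          refine ⟨?_, Or.inl ⟨a - 1, by rw [sub_add_cancel]⟩⟩
          intro he
          have h1' : a + (-1) = a + 0 := by
            rw [add_zero, ← sub_eq_add_neg]; exact Sum.inl.inj he
          exact one_ne_zero (neg_eq_zero.mp (add_left_cancel h1'))
        · show c ∈ gc ((a - 1 - x).val)
          have e1 : a - 1 - x = (a - x) + ((n - 1 : ℕ) : ZMod n) := by
            have e2 : ((n - 1 : ℕ) : ZMod n) = -1 := by
              rw [Nat.cast_sub (by omega : 1 ≤ n), ZMod.natCast_self, Nat.cast_one]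
              ring
            rw [e2]; ring
          rw [e1, ZMod.val_add, ZMod.val_cast_of_lt (by omega : n - 1 < n)]
          exact hm
      · exact ⟨Sum.inl a, Or.inl rfl, hm⟩
      · rcases eq_or_ne ((a-x).val) 0 with he | he
        · rw [if_pos he] at hm
          have hax : a = x := by
            exact sub_eq_zero.mp ((ZMod.val_eq_zero _).mp he)
          refine ⟨Sum.inr ⟨0, hk0⟩, Or.inr ?_, hm⟩
          rw [cap_adj hk0]
          exact ⟨by simp, Or.inr (Or.inr (Or.inl (by rw [hax, Sym2.eq_swap])))⟩
        · rw [if_neg he] at hm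
          exact absurd hm (notMem_empty c)
      · rcases eq_or_ne ((a-x).val) d with he | he
        · rw [if_pos he] at hm
          have hax : a = y := by
            have e3 : ((a - x).val : ZMod n) = a - x := ZMod.natCast_rightInverse _
            rw [he] at e3
            have : a - x = (d : ZMod n) := e3.symm
            rw [hy]
            have := sub_eq_iff_eq_add.mp this
            rw [this]; ring
          refine ⟨Sum.inr ⟨k-1, Nat.sub_lt hk0 one_pos⟩, Or.inr ?_, hm⟩
          rw [cap_adj hk0]
          exact ⟨by simp, Or.inr (Or.inr (Or.inr (by rw [hax, Sym2.eq_swap])))⟩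
        · rw [if_neg he] at hm
          exact absurd hm (notMem_empty c)
    · have hmem := h4 i.val i.isLt (mem_univ c)
      simp only [mem_union] at hmem
      rcases hmem with ((hm | hm) | hm)
      · rcases eq_or_ne (i.val) 0 with he | he
        · rw [if_pos he] at hm
          refine ⟨Sum.inl x, Or.inr ?_, ?_⟩
          · rw [cap_adj hk0]
            refine ⟨by simp, Or.inr (Or.inr (Or.inl ?_))⟩
            rw [show i = (⟨0, hk0⟩ : Fin k) from Fin.ext he]
          · show c ∈ gc ((x - x).val)
            rw [sub_self, ZMod.val_zero]
            exact hm
        · rw [if_neg he] at hm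
          refine ⟨Sum.inr ⟨i.val - 1, by omega⟩, Or.inr ?_, hm⟩
          rw [cap_adj hk0]
          refine ⟨?_, Or.inr (Or.inl ⟨⟨i.val - 1, by omega⟩,
            show i.val - 1 + 1 < k by omega, ?_⟩)⟩
          · intro hcon
            have h5 : i.val - 1 = i.val := congrArg Fin.val (Sum.inr.inj hcon)
            omega
          · have e5 : (Sum.inr i : ZMod n ⊕ Fin k) =
                Sum.inr (⟨(⟨i.val - 1, by omega⟩ : Fin k).val + 1,
                  show i.val - 1 + 1 < k by omega⟩ : Fin k) :=
              congrArg Sum.inr (Fin.ext (show i.val = i.val - 1 + 1 by omega))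
            rw [← e5]
      · rcases eq_or_ne (i.val) (k-1) with he | he
        · rw [if_pos he] at hm
          refine ⟨Sum.inl y, Or.inr ?_, ?_⟩
          · rw [cap_adj hk0]
            refine ⟨by simp, Or.inr (Or.inr (Or.inr ?_))⟩
            rw [show i = (⟨k-1, Nat.sub_lt hk0 one_pos⟩ : Fin k) from Fin.ext he]
          · show c ∈ gc ((y - x).val)
            rw [hyd]; exact hm
        · rw [if_neg he] at hm
          refine ⟨Sum.inr ⟨i.val + 1, by omega⟩, Or.inr ?_, hm⟩
          rw [cap_adj hk0]
          refine ⟨?_, Or.inr (Or.inl ⟨i, by omega, ?_⟩)⟩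
          · intro hcon
            have h5 : i.val + 1 = i.val := congrArg Fin.val (Sum.inr.inj hcon)
            omega
          · rw [Sym2.eq_swap]
      · exact ⟨Sum.inr i, Or.inl rfl, hm⟩

instance : DecidableRel C4C4.Adj := fun u v =>
  decidable_of_iff' ((s(u,v) = s(0,1) ∨ s(u,v) = s(1,2) ∨ s(u,v) = s(2,3) ∨ s(u,v) = s(3,0) ∨
      s(u,v) = s(0,4) ∨ s(u,v) = s(4,5) ∨ s(u,v) = s(5,6) ∨ s(u,v) = s(6,0)) ∧ u ≠ v) (by
    simp only [C4C4, SimpleGraph.fromEdgeSet_adj, Set.mem_insert_iff, Set.mem_singleton_iff])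

instance : DecidableRel Graph1.Adj := fun u v =>
  decidable_of_iff' (((s(u,v) = s(0,1) ∨ s(u,v) = s(1,2) ∨ s(u,v) = s(2,3) ∨ s(u,v) = s(3,4) ∨
      s(u,v) = s(4,5) ∨ s(u,v) = s(5,6) ∨ s(u,v) = s(6,0)) ∨ s(u,v) = s(2,5)) ∧ u ≠ v) (by
    simp only [Graph1, cyc7Edges, SimpleGraph.fromEdgeSet_adj, Set.mem_union,
      Set.mem_insert_iff, Set.mem_singleton_iff])

instance capDec (n k : ℕ) [NeZero n] [NeZero k] (x y : ZMod n) :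
    DecidableRel (cycleAttachPath n k x y).Adj := fun u v =>
  decidable_of_iff' _ (cap_adj (Nat.pos_of_ne_zero (NeZero.ne k)) x y u v)

def eC : ZMod 4 ⊕ Fin 3 ≃ Fin 7 where
  toFun v := Sum.elim (fun a => (⟨a.val, lt_of_lt_of_le (ZMod.val_lt a) (by norm_num)⟩ : Fin 7))
    (fun i => ⟨4 + i.val, by have := i.isLt; omega⟩) v
  invFun j := if h : (j : ℕ) < 4 then Sum.inl ((j : ℕ) : ZMod 4)
    else Sum.inr ⟨(j : ℕ) - 4, by have := j.isLt; omega⟩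
  left_inv := by decide
  right_inv := by decide

def eG1 : ZMod 4 ⊕ Fin 3 ≃ Fin 7 where
  toFun v := Sum.elim (fun a => ![(5 : Fin 7), 2, 3, 4] ⟨a.val, ZMod.val_lt a⟩)
    (fun i => ![(6 : Fin 7), 0, 1] i) v
  invFun := ![Sum.inr 1, Sum.inr 2, Sum.inl 1, Sum.inl 2, Sum.inl 3, Sum.inl 0, Sum.inr 0]
  left_inv := by decide
  right_inv := by decide

def eG3 : ZMod 4 ⊕ Fin 3 ≃ Fin 7 where
  toFun v := Sum.elim (fun a => ![(5 : Fin 7), 4, 3, 2] ⟨a.val, ZMod.val_lt a⟩)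
    (fun i => ![(6 : Fin 7), 0, 1] i) v
  invFun := ![Sum.inr 1, Sum.inr 2, Sum.inl 3, Sum.inl 2, Sum.inl 1, Sum.inl 0, Sum.inr 0]
  left_inv := by decide
  right_inv := by decide

lemma exIso1 (x : ZMod 4) : Nonempty (cycleAttachPath 4 3 x x ≃g C4C4) := by
  have hAll : ∀ u v, C4C4.Adj (((Equiv.sumCongr (Equiv.subRight x) (Equiv.refl (Fin 3))).trans eC) u)
      (((Equiv.sumCongr (Equiv.subRight x) (Equiv.refl (Fin 3))).trans eC) v) ↔
      (cycleAttachPath 4 3 x x).Adj u v := by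
    revert x; decide
  exact ⟨⟨_, hAll _ _⟩⟩

lemma exIso2 (x : ZMod 4) : Nonempty (cycleAttachPath 4 3 x (x + 1) ≃g Graph1) := by
  have hAll : ∀ u v, Graph1.Adj (((Equiv.sumCongr (Equiv.subRight x) (Equiv.refl (Fin 3))).trans eG1) u)
      (((Equiv.sumCongr (Equiv.subRight x) (Equiv.refl (Fin 3))).trans eG1) v) ↔
      (cycleAttachPath 4 3 x (x + 1)).Adj u v := by
    revert x; decide
  exact ⟨⟨_, hAll _ _⟩⟩

lemma exIso3 (x : ZMod 4) : Nonempty (cycleAttachPath 4 3 x (x + 3) ≃g Graph1) := by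
  have hAll : ∀ u v, Graph1.Adj (((Equiv.sumCongr (Equiv.subRight x) (Equiv.refl (Fin 3))).trans eG3) u)
      (((Equiv.sumCongr (Equiv.subRight x) (Equiv.refl (Fin 3))).trans eG3) v) ↔
      (cycleAttachPath 4 3 x (x + 3)).Adj u v := by
    revert x; decide
  exact ⟨⟨_, hAll _ _⟩⟩

theorem stmt10 (n k : ℕ) (hn : 3 ≤ n) (hk : 3 ≤ k) (x y : ZMod n)
    (h1 : IsEmpty (cycleAttachPath n k x y ≃g C4C4))
    (h2 : IsEmpty (cycleAttachPath n k x y ≃g Graph1)) :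
    Configurable (cycleAttachPath n k x y) := by
  haveI : NeZero n := ⟨by omega⟩
  set d := (y - x).val with hdd
  have hdn : d < n := ZMod.val_lt _
  have hxy : y = x + ((d : ℕ) : ZMod n) := by
    rw [hdd, ZMod.natCast_rightInverse (y - x)]; ring
  rw [hxy] at h1 h2 ⊢
  by_cases hd0 : d = 0
  · by_cases hex : n = 4 ∧ k = 3
    · obtain ⟨rfl, rfl⟩ := hex
      rw [hd0] at h1
      simp only [Nat.cast_zero, add_zero] at h1
      exact ((exIso1 x).elim fun iso => h1.false iso).elim
    · rw [hd0]
      exact bridge n k 0 hn hk (by omega) x _ _ (mainPos0 n k hn hk hex)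
  · by_cases h2d : 2*d ≤ n
    · by_cases h22 : n = 4 ∧ d = 2
      · obtain ⟨rfl, hd2⟩ := h22
        rw [hd2]
        exact bridge 4 k 2 hn hk (by omega) x _ _ (main22 k hk)
      · by_cases hexc : n = 4 ∧ k = 3 ∧ d = 1
        · obtain ⟨rfl, rfl, hd1⟩ := hexc
          rw [hd1] at h2
          simp only [Nat.cast_one] at h2
          exact ((exIso2 x).elim fun iso => h2.false iso).elim
        · exact bridge n k d hn hk hdn x _ _
            (mainPosStd n k d hn hk (by omega) h2d h22 hexc)
    · by_cases hexc : n = 4 ∧ k = 3 ∧ d = 3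
      · obtain ⟨rfl, rfl, hd3⟩ := hexc
        rw [hd3] at h2
        simp only [Nat.cast_ofNat] at h2
        exact ((exIso3 x).elim fun iso => h2.false iso).elim
      · have hd' : 1 ≤ n - d := by omega
        have h2d' : 2*(n-d) ≤ n := by omega
        have h22' : ¬(n = 4 ∧ n - d = 2) := by omega
        have hexc' : ¬(n = 4 ∧ k = 3 ∧ n - d = 1) := by
          rintro ⟨rfl, rfl, hh⟩; exact hexc ⟨rfl, rfl, by omega⟩
        have hc := mainPosStd n k (n-d) hn hk hd' h2d' h22' hexc'
        have hr := reflCond n k (n-d) hn hd' (by omega) _ _ hc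
        rw [show n - (n - d) = d by omega] at hr
        exact bridge n k d hn hk hdn x _ _ hr
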